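/- arXiv:1405.0143 — 2 statements merged into one kernel-verified Lean document; each statement's English description precedes it below -/
import Mathlib

section
/- There do not exist integers b1, b2, b3, a sign ε ∈ {1, -1}, and δ ∈ {0, 1} such that m4 = b1·b2 + ε·b3·(b3 + δ) and m2 = b1 + b2 - ε·δ, whenever m4 ≡ 3 (mod 8) and m2 ≡ 2 (mod 4). -/
private lemma castZ8 {a b : ℤ} (h : a % 8 = b % 8) : (a : ZMod 8) = (b : ZMod 8) := by
  have := Int.emod_emod_of_dvd a (dvd_refl 8)
  exact (ZMod.intCast_eq_intCast_iff' a b 8).mpr (by exact_mod_cast h)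

theorem stmt_0 (m4 m2 : ℤ) (h4 : m4 % 8 = 3) (h2 : m2 % 4 = 2) :
    ¬ ∃ (b1 b2 b3 ε δ : ℤ), (ε = 1 ∨ ε = -1) ∧ (δ = 0 ∨ δ = 1) ∧
      m4 = b1 * b2 + ε * b3 * (b3 + δ) ∧ m2 = b1 + b2 - ε * δ := by
  rintro ⟨b1, b2, b3, ε, δ, hε, hδ, e4, e2⟩
  have hs : (b1 + b2 - ε * δ) % 8 = 2 ∨ (b1 + b2 - ε * δ) % 8 = 6 := by omega
  have h4' : (b1 * b2 + ε * b3 * (b3 + δ)) % 8 = 3 := by omega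
  have H4 : ((b1 : ZMod 8)) * b2 + (ε : ZMod 8) * b3 * ((b3 : ZMod 8) + δ) = 3 := by
    have := castZ8 (a := b1 * b2 + ε * b3 * (b3 + δ)) (b := 3) (by omega)
    push_cast at this
    exact this
  have HS : ((b1 : ZMod 8)) + b2 - (ε : ZMod 8) * δ = 2 ∨ ((b1 : ZMod 8)) + b2 - (ε : ZMod 8) * δ = 6 := by
    rcases hs with h | h
    · left
      have := castZ8 (a := b1 + b2 - ε * δ) (b := 2) (by omega)
      push_cast at this; exact this
    · right
      have := castZ8 (a := b1 + b2 - ε * δ) (b := 6) (by omega)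
      push_cast at this; exact this
  rcases hε with rfl | rfl <;> rcases hδ with rfl | rfl <;> push_cast at H4 HS
  · exact (by decide : ∀ x y z : ZMod 8, ¬ (x * y + 1 * z * (z + 0) = 3 ∧ (x + y - 1 * 0 = 2 ∨ x + y - 1 * 0 = 6))) b1 b2 b3 ⟨H4, HS⟩
  · exact (by decide : ∀ x y z : ZMod 8, ¬ (x * y + 1 * z * (z + 1) = 3 ∧ (x + y - 1 * 1 = 2 ∨ x + y - 1 * 1 = 6))) b1 b2 b3 ⟨H4, HS⟩
  · exact (by decide : ∀ x y z : ZMod 8, ¬ (x * y + (-1) * z * (z + 0) = 3 ∧ (x + y - (-1) * 0 = 2 ∨ x + y - (-1) * 0 = 6))) b1 b2 b3 ⟨H4, HS⟩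
  · exact (by decide : ∀ x y z : ZMod 8, ¬ (x * y + (-1) * z * (z + 1) = 3 ∧ (x + y - (-1) * 1 = 2 ∨ x + y - (-1) * 1 = 6))) b1 b2 b3 ⟨H4, HS⟩
end

section
/- For integers n, p, q: if p·q = -(4n+1) and p + q = 2n, then n = 0 or n = -4. -/
theorem stmt_4 (n p q : ℤ) (hpq : p * q = -(4 * n + 1)) (hsum : p + q = 2 * n) :
    n = 0 ∨ n = -4 := by
  have h : (q + 2) * (2 * n - q + 2) = 3 := by linear_combination hpq - q * hsum
  have hd : (q + 2) ∣ 3 := ⟨_, h.symm⟩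
  have h1 : q ≤ 1 := by have := Int.le_of_dvd (by norm_num) hd; omega
  have h2 : -5 ≤ q := by have := Int.le_of_dvd (by norm_num) ((neg_dvd).mpr hd); omega
  interval_cases q <;> omega
end
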